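/- Let 0 < t < 1. There exists a sequence γ : ℕ → ℂ such that the Hankel matrix {γ_{j+k}}_{j,k≥0} belongs to the injective tensor product ℓ¹⊗̌ℓ¹ but ∑_{k≥0} |γ_k|^t (1+k)^{3t/2 − 1} = ∞. -/

import Mathlib

open Filter Finset

noncomputable section HankelAux
open Complex


/-- `P`-th root of unity. -/
def zz (P : ℕ) : ℂ := Complex.exp (((2 * Real.pi / P : ℝ) : ℂ) * Complex.I)

lemma zz_prim (P : ℕ) (hP : P ≠ 0) : IsPrimitiveRoot (zz P) P := by
  have h := Complex.isPrimitiveRoot_exp P hP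
  have : (2 * ↑Real.pi * Complex.I / (P:ℂ)) = ((2 * Real.pi / P : ℝ) : ℂ) * Complex.I := by
    push_cast; ring
  rwa [this] at h

lemma zz_pow_card (P : ℕ) (hP : P ≠ 0) : zz P ^ P = 1 := (zz_prim P hP).pow_eq_one

lemma zz_norm_pow (P n : ℕ) : ‖zz P ^ n‖ = 1 := by
  rw [norm_pow, zz, Complex.norm_exp_ofReal_mul_I, one_pow]

lemma zz_ne_zero (P : ℕ) : zz P ≠ 0 := Complex.exp_ne_zero _

lemma conj_zz_pow (P n : ℕ) : (starRingEnd ℂ) (zz P ^ n) = (zz P ^ n)⁻¹ := by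
  have h1 : zz P ^ n * (starRingEnd ℂ) (zz P ^ n) = 1 := by
    rw [Complex.mul_conj]
    have : Complex.normSq (zz P ^ n) = ‖zz P ^ n‖ ^ 2 := by
      rw [Complex.normSq_eq_norm_sq]
    rw [this, zz_norm_pow]
    norm_num
  exact (inv_eq_of_mul_eq_one_right h1).symm

lemma ortho (P : ℕ) (hP : 0 < P) (a b : ℕ) (ha : a < P) (hb : b < P) :
    ∑ r ∈ range P, zz P ^ (r * a) * (starRingEnd ℂ) (zz P ^ (r * b))
      = if a = b then (P : ℂ) else 0 := by
  have hterm : ∀ r : ℕ, zz P ^ (r * a) * (starRingEnd ℂ) (zz P ^ (r * b))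
      = (zz P ^ a * (zz P ^ b)⁻¹) ^ r := by
    intro r
    rw [conj_zz_pow, mul_pow, inv_pow, ← pow_mul, ← pow_mul, mul_comm a r, mul_comm b r]
  simp only [hterm]
  set w : ℂ := zz P ^ a * (zz P ^ b)⁻¹ with hw
  have hwP : w ^ P = 1 := by
    rw [hw, mul_pow, inv_pow, ← pow_mul, ← pow_mul, mul_comm a P, mul_comm b P,
      pow_mul, pow_mul, zz_pow_card P hP.ne', one_pow]
    norm_num
  by_cases hab : a = b
  · subst hab
    have : w = 1 := mul_inv_cancel₀ (pow_ne_zero _ (zz_ne_zero P))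
    simp [this]
  · have hwne : w ≠ 1 := by
      intro h
      apply hab
      refine (zz_prim P hP.ne').pow_inj ha hb ?_
      rw [hw, mul_inv_eq_one₀ (pow_ne_zero _ (zz_ne_zero P))] at h
      exact h
    rw [geom_sum_eq hwne, hwP]
    simp [hab]

/-- Parseval-type identity for the Dirichlet kernel. -/
lemma parseval (P L : ℕ) (hL : 0 < L) (hLP : L ≤ P) :
    ∑ r ∈ range P, ‖∑ u ∈ range L, zz P ^ (r * u)‖ ^ 2 = (P : ℝ) * L := by
  have hP : 0 < P := lt_of_lt_of_le hL hLP
  have key : ∑ r ∈ range P, ((∑ u ∈ range L, zz P ^ (r * u)) *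
      (starRingEnd ℂ) (∑ u ∈ range L, zz P ^ (r * u))) = ((P : ℂ)) * L := by
    have expand : ∀ r : ℕ, (∑ u ∈ range L, zz P ^ (r * u)) *
        (starRingEnd ℂ) (∑ u ∈ range L, zz P ^ (r * u))
        = ∑ u ∈ range L, ∑ v ∈ range L, zz P ^ (r * u) * (starRingEnd ℂ) (zz P ^ (r * v)) := by
      intro r
      rw [map_sum, Finset.sum_mul_sum]
    simp only [expand]
    rw [Finset.sum_comm]
    have : ∀ u ∈ range L, ∑ r ∈ range P, ∑ v ∈ range L, zz P ^ (r*u) * (starRingEnd ℂ) (zz P ^ (r*v))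
        = (P : ℂ) := by
      intro u hu
      rw [Finset.sum_comm]
      have : ∀ v ∈ range L, ∑ r ∈ range P, zz P ^ (r*u) * (starRingEnd ℂ) (zz P ^ (r*v))
          = if u = v then (P:ℂ) else 0 := by
        intro v hv
        exact ortho P hP u v (lt_of_lt_of_le (mem_range.1 hu) hLP) (lt_of_lt_of_le (mem_range.1 hv) hLP)
      rw [Finset.sum_congr rfl this, Finset.sum_ite_eq (range L) u (fun _ => (P:ℂ)),
        if_pos hu]
    rw [Finset.sum_congr rfl this, Finset.sum_const, card_range, nsmul_eq_mul, mul_comm]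
  have cast1 : ((∑ r ∈ range P, ‖∑ u ∈ range L, zz P ^ (r * u)‖ ^ 2 : ℝ) : ℂ)
      = ∑ r ∈ range P, ((∑ u ∈ range L, zz P ^ (r * u)) *
        (starRingEnd ℂ) (∑ u ∈ range L, zz P ^ (r * u))) := by
    push_cast
    refine Finset.sum_congr rfl (fun r _ => ?_)
    rw [Complex.mul_conj]
    norm_cast
    rw [Complex.normSq_eq_norm_sq]
  rw [key] at cast1
  exact_mod_cast cast1


/-- The Gauss-type bilinear estimate. -/
lemma gauss (J : ℕ) (hJ : 0 < J) (a b : ℕ → ℂ) (ha : ∀ j, ‖a j‖ ≤ 1) (hb : ∀ k, ‖b k‖ ≤ 1) :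
    ‖∑ j ∈ range J, ∑ k ∈ range J, zz J ^ (j * k) * a j * b k‖ ≤ (J : ℝ) * Real.sqrt J := by
  set F : ℕ → ℂ := fun j => ∑ k ∈ range J, zz J ^ (j * k) * b k with hF
  have step1 : ‖∑ j ∈ range J, ∑ k ∈ range J, zz J ^ (j * k) * a j * b k‖
      ≤ ∑ j ∈ range J, ‖F j‖ := by
    calc ‖∑ j ∈ range J, ∑ k ∈ range J, zz J ^ (j * k) * a j * b k‖
        ≤ ∑ j ∈ range J, ‖∑ k ∈ range J, zz J ^ (j * k) * a j * b k‖ :=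
          norm_sum_le _ _
      _ ≤ ∑ j ∈ range J, ‖F j‖ := by
          refine Finset.sum_le_sum (fun j _ => ?_)
          have : ∑ k ∈ range J, zz J ^ (j * k) * a j * b k = a j * F j := by
            rw [hF, Finset.mul_sum]
            exact Finset.sum_congr rfl (fun k _ => by ring)
          rw [this, norm_mul]
          calc ‖a j‖ * ‖F j‖ ≤ 1 * ‖F j‖ :=
                mul_le_mul_of_nonneg_right (ha j) (norm_nonneg _)
            _ = ‖F j‖ := one_mul _
  -- ∑ ‖F j‖² ≤ J²
  have step2 : ∑ j ∈ range J, ‖F j‖ ^ 2 ≤ (J : ℝ) ^ 2 := by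
    have key : ∑ j ∈ range J, (F j * (starRingEnd ℂ) (F j))
        = (J : ℂ) * ∑ k ∈ range J, (b k * (starRingEnd ℂ) (b k)) := by
      have expand : ∀ j : ℕ, F j * (starRingEnd ℂ) (F j)
          = ∑ k ∈ range J, ∑ k' ∈ range J,
              (b k * (starRingEnd ℂ) (b k')) * (zz J ^ (j * k) * (starRingEnd ℂ) (zz J ^ (j * k'))) := by
        intro j
        rw [hF, map_sum, Finset.sum_mul_sum]
        refine Finset.sum_congr rfl (fun k _ => Finset.sum_congr rfl (fun k' _ => ?_))
        rw [map_mul]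
        ring
      simp only [expand]
      rw [Finset.sum_comm]
      have inner : ∀ k ∈ range J, ∑ j ∈ range J, ∑ k' ∈ range J,
          (b k * (starRingEnd ℂ) (b k')) * (zz J ^ (j * k) * (starRingEnd ℂ) (zz J ^ (j * k')))
          = (J : ℂ) * (b k * (starRingEnd ℂ) (b k)) := by
        intro k hk
        rw [Finset.sum_comm]
        have : ∀ k' ∈ range J, ∑ j ∈ range J,
            (b k * (starRingEnd ℂ) (b k')) * (zz J ^ (j * k) * (starRingEnd ℂ) (zz J ^ (j * k')))
            = (b k * (starRingEnd ℂ) (b k')) * (if k = k' then (J:ℂ) else 0) := by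
          intro k' hk'
          rw [← Finset.mul_sum, ortho J hJ k k' (mem_range.1 hk) (mem_range.1 hk')]
        rw [Finset.sum_congr rfl this]
        have : ∀ k' ∈ range J, (b k * (starRingEnd ℂ) (b k')) * (if k = k' then (J:ℂ) else 0)
            = if k = k' then (J:ℂ) * (b k * (starRingEnd ℂ) (b k')) else 0 := by
          intro k' _
          split_ifs <;> ring
        rw [Finset.sum_congr rfl this, Finset.sum_ite_eq (range J) k, if_pos hk]
      rw [Finset.sum_congr rfl inner, ← Finset.mul_sum]
    -- take real parts / norms
    have cast1 : ((∑ j ∈ range J, ‖F j‖ ^ 2 : ℝ) : ℂ) = ∑ j ∈ range J, (F j * (starRingEnd ℂ) (F j)) := by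
      push_cast
      refine Finset.sum_congr rfl (fun j _ => ?_)
      rw [Complex.mul_conj]
      norm_cast
      rw [Complex.normSq_eq_norm_sq]
    have cast2 : ((∑ k ∈ range J, ‖b k‖ ^ 2 : ℝ) : ℂ) = ∑ k ∈ range J, (b k * (starRingEnd ℂ) (b k)) := by
      push_cast
      refine Finset.sum_congr rfl (fun k _ => ?_)
      rw [Complex.mul_conj]
      norm_cast
      rw [Complex.normSq_eq_norm_sq]
    have : (∑ j ∈ range J, ‖F j‖ ^ 2 : ℝ) = (J:ℝ) * ∑ k ∈ range J, ‖b k‖ ^ 2 := by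
      have h2 : ((∑ j ∈ range J, ‖F j‖ ^ 2 : ℝ) : ℂ)
          = ((J:ℝ):ℂ) * ((∑ k ∈ range J, ‖b k‖ ^ 2 : ℝ):ℂ) := by
        rw [cast1, key, cast2]
        norm_cast
      exact_mod_cast h2
    rw [this]
    have : ∑ k ∈ range J, ‖b k‖ ^ 2 ≤ (J:ℝ) := by
      calc ∑ k ∈ range J, ‖b k‖ ^ 2 ≤ ∑ k ∈ range J, 1 := by
            refine Finset.sum_le_sum (fun k _ => ?_)
            have := hb k
            nlinarith [norm_nonneg (b k)]
        _ = (J:ℝ) := by simp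
    nlinarith [this, Nat.cast_nonneg (α := ℝ) J]
  -- Cauchy–Schwarz
  have cs : (∑ j ∈ range J, ‖F j‖) ^ 2 ≤ (J:ℝ) * ∑ j ∈ range J, ‖F j‖ ^ 2 := by
    have := Finset.sum_mul_sq_le_sq_mul_sq (range J) (fun _ => (1:ℝ)) (fun j => ‖F j‖)
    simpa using this
  have hsum_nonneg : (0:ℝ) ≤ ∑ j ∈ range J, ‖F j‖ :=
    Finset.sum_nonneg (fun j _ => norm_nonneg _)
  have bound : (∑ j ∈ range J, ‖F j‖) ^ 2 ≤ ((J:ℝ) * Real.sqrt J) ^ 2 := by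
    have hJ3 : (J:ℝ) * ∑ j ∈ range J, ‖F j‖ ^ 2 ≤ (J:ℝ)^3 := by
      have := step2
      have hJnn : (0:ℝ) ≤ (J:ℝ) := Nat.cast_nonneg _
      nlinarith
    have : ((J:ℝ) * Real.sqrt J) ^ 2 = (J:ℝ)^3 := by
      rw [mul_pow, Real.sq_sqrt (Nat.cast_nonneg _)]
      ring
    linarith [cs, hJ3, this.ge]
  have : ∑ j ∈ range J, ‖F j‖ ≤ (J:ℝ) * Real.sqrt J := by
    have hrhs : (0:ℝ) ≤ (J:ℝ) * Real.sqrt J :=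
      mul_nonneg (Nat.cast_nonneg _) (Real.sqrt_nonneg _)
    nlinarith [bound, hsum_nonneg, hrhs]
  linarith [step1, this]

/-- the quadratic phase -/
def phase (m n : ℕ) : ℂ :=
  Complex.exp (((Real.pi * ((n:ℝ) - 2^(m+1))^2 / 2^(m+2) : ℝ) : ℂ) * Complex.I)

def Bb (m k : ℕ) : ℂ :=
  Complex.exp ((((Real.pi * (k:ℝ)^2 - 2 * Real.pi * 2^(m+1) * (k:ℝ)) / 2^(m+2) : ℝ) : ℂ) * Complex.I)

def Tcnt (m n : ℕ) : ℕ :=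
  ((range (2^m) ×ˢ range (2^m)).filter (fun p => p.1 + p.2 + 2^(m+1) = n)).card

lemma zz_pow_eq_exp (P n : ℕ) :
    zz P ^ n = Complex.exp ((n : ℂ) * (((2 * Real.pi / P : ℝ) : ℂ) * Complex.I)) := by
  rw [zz, ← Complex.exp_nat_mul]

lemma phase_factor (m j k : ℕ) :
    phase m (j + k) = phase m j * Bb m k * zz (2^(m+2)) ^ (j * k) := by
  rw [phase, phase, Bb, zz_pow_eq_exp, ← Complex.exp_add, ← Complex.exp_add]
  congr 1
  have h2 : ((2:ℝ)^(m+2) : ℝ) ≠ 0 := by positivity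
  push_cast
  have h2' : ((2:ℂ)^(m+2) : ℂ) ≠ 0 := by
    exact_mod_cast Complex.ofReal_ne_zero.2 h2
  field_simp
  ring

lemma Tcnt_cast (m n : ℕ) :
    ((Tcnt m n : ℕ) : ℂ)
      = ∑ u ∈ range (2^m), ∑ v ∈ range (2^m),
          (if u + v + 2^(m+1) = n then (1:ℂ) else 0) := by
  rw [Tcnt, card_filter, ← Finset.sum_product']
  push_cast
  rfl

lemma Tcnt_eq_zero_left (m n : ℕ) (h : n < 2^(m+1)) : Tcnt m n = 0 := by
  rw [Tcnt, Finset.card_eq_zero, Finset.filter_eq_empty_iff]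
  intro p _
  omega

lemma Tcnt_eq_zero_right (m n : ℕ) (h : 2^(m+2) - 1 ≤ n) : Tcnt m n = 0 := by
  rw [Tcnt, Finset.card_eq_zero, Finset.filter_eq_empty_iff]
  intro p hp
  rw [Finset.mem_product, Finset.mem_range, Finset.mem_range] at hp
  have e : (2:ℕ)^(m+2) = 2^m + 2^m + 2^(m+1) := by ring
  omega

lemma key (m j k : ℕ) (hj : j < 2^(m+2)) (hk : k < 2^(m+2)) :
    phase m (j+k) * ((Tcnt m (j+k) : ℕ) : ℂ)
      = (((2^(m+3):ℕ)):ℂ)⁻¹ * ∑ r ∈ range (2^(m+3)),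
          (∑ u ∈ range (2^m), zz (2^(m+3)) ^ (r*u))^2 * zz (2^(m+3)) ^ (r * 2^(m+1)) *
          (zz (2^(m+2)) ^ (j*k) *
            ((starRingEnd ℂ) (zz (2^(m+3)) ^ (r*j)) * phase m j) *
            ((starRingEnd ℂ) (zz (2^(m+3)) ^ (r*k)) * Bb m k)) := by
  have hP : (0:ℕ) < 2^(m+3) := Nat.pow_pos (by norm_num)
  have hPc : ((2^(m+3):ℕ):ℂ) ≠ 0 := by
    exact_mod_cast Nat.cast_ne_zero.2 hP.ne'
  -- step 1: expand Tcnt and delta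
  have delta : ∀ u ∈ range (2^m), ∀ v ∈ range (2^m),
      (if u + v + 2^(m+1) = j + k then (1:ℂ) else 0)
        = (((2^(m+3):ℕ)):ℂ)⁻¹ * ∑ r ∈ range (2^(m+3)),
            zz (2^(m+3)) ^ (r*(u+v+2^(m+1))) * (starRingEnd ℂ) (zz (2^(m+3)) ^ (r*(j+k))) := by
    intro u hu v hv
    rw [ortho (2^(m+3)) hP (u+v+2^(m+1)) (j+k) (by
        rw [mem_range] at hu hv
        have e : (2:ℕ)^(m+3) = 2^m + 2^m + 2^(m+1) + 2^(m+2) := by ring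
        omega) (by
        have e : (2:ℕ)^(m+3) = 2^(m+2) + 2^(m+2) := by ring
        omega)]
    split_ifs with h
    · rw [mul_comm, mul_inv_cancel₀ hPc]
    · rw [mul_zero]
  -- pointwise term identity
  have term_eq : ∀ r u v : ℕ,
      phase m (j+k) * (zz (2^(m+3)) ^ (r*(u+v+2^(m+1))) * (starRingEnd ℂ) (zz (2^(m+3)) ^ (r*(j+k))))
        = (zz (2^(m+3)) ^ (r*u) * zz (2^(m+3)) ^ (r*v)) * zz (2^(m+3)) ^ (r * 2^(m+1)) *
          (zz (2^(m+2)) ^ (j*k) *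
            ((starRingEnd ℂ) (zz (2^(m+3)) ^ (r*j)) * phase m j) *
            ((starRingEnd ℂ) (zz (2^(m+3)) ^ (r*k)) * Bb m k)) := by
    intro r u v
    have e1 : zz (2^(m+3)) ^ (r*(u+v+2^(m+1)))
        = zz (2^(m+3)) ^ (r*u) * zz (2^(m+3)) ^ (r*v) * zz (2^(m+3)) ^ (r*2^(m+1)) := by
      rw [← pow_add (zz (2^(m+3))) (r*u) (r*v),
        ← pow_add (zz (2^(m+3))) (r*u + r*v) (r*2^(m+1))]
      congr 1
      ring
    have e2 : (starRingEnd ℂ) (zz (2^(m+3)) ^ (r*(j+k)))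
        = (starRingEnd ℂ) (zz (2^(m+3)) ^ (r*j)) * (starRingEnd ℂ) (zz (2^(m+3)) ^ (r*k)) := by
      rw [← map_mul, ← pow_add (zz (2^(m+3))) (r*j) (r*k)]
      congr 2
      ring
    rw [e1, e2, phase_factor m j k]
    ring
  calc phase m (j+k) * ((Tcnt m (j+k) : ℕ) : ℂ)
      = ∑ u ∈ range (2^m), ∑ v ∈ range (2^m),
          phase m (j+k) * (if u + v + 2^(m+1) = j + k then (1:ℂ) else 0) := by
        rw [Tcnt_cast, Finset.mul_sum]
        exact Finset.sum_congr rfl (fun u _ => by rw [Finset.mul_sum])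
    _ = ∑ u ∈ range (2^m), ∑ v ∈ range (2^m),
          (((2^(m+3):ℕ)):ℂ)⁻¹ * ∑ r ∈ range (2^(m+3)),
            phase m (j+k) * (zz (2^(m+3)) ^ (r*(u+v+2^(m+1))) * (starRingEnd ℂ) (zz (2^(m+3)) ^ (r*(j+k))))  := by
        refine Finset.sum_congr rfl (fun u hu => Finset.sum_congr rfl (fun v hv => ?_))
        rw [delta u hu v hv]
        simp only [Finset.mul_sum]
        try exact Finset.sum_congr rfl (fun r _ => by ring)
    _ = (((2^(m+3):ℕ)):ℂ)⁻¹ * ∑ r ∈ range (2^(m+3)), ∑ u ∈ range (2^m), ∑ v ∈ range (2^m),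
            phase m (j+k) * (zz (2^(m+3)) ^ (r*(u+v+2^(m+1))) * (starRingEnd ℂ) (zz (2^(m+3)) ^ (r*(j+k)))) := by
        calc ∑ u ∈ range (2^m), ∑ v ∈ range (2^m),
              (((2^(m+3):ℕ)):ℂ)⁻¹ * ∑ r ∈ range (2^(m+3)),
                phase m (j+k) * (zz (2^(m+3)) ^ (r*(u+v+2^(m+1))) * (starRingEnd ℂ) (zz (2^(m+3)) ^ (r*(j+k))))
            = (((2^(m+3):ℕ)):ℂ)⁻¹ * ∑ u ∈ range (2^m), ∑ v ∈ range (2^m), ∑ r ∈ range (2^(m+3)),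
                phase m (j+k) * (zz (2^(m+3)) ^ (r*(u+v+2^(m+1))) * (starRingEnd ℂ) (zz (2^(m+3)) ^ (r*(j+k)))) := by
              rw [Finset.mul_sum]
              refine Finset.sum_congr rfl (fun u _ => ?_)
              rw [Finset.mul_sum]
          _ = (((2^(m+3):ℕ)):ℂ)⁻¹ * ∑ u ∈ range (2^m), ∑ r ∈ range (2^(m+3)), ∑ v ∈ range (2^m),
                phase m (j+k) * (zz (2^(m+3)) ^ (r*(u+v+2^(m+1))) * (starRingEnd ℂ) (zz (2^(m+3)) ^ (r*(j+k)))) := by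
              congr 1
              exact Finset.sum_congr rfl (fun u _ => Finset.sum_comm)
          _ = (((2^(m+3):ℕ)):ℂ)⁻¹ * ∑ r ∈ range (2^(m+3)), ∑ u ∈ range (2^m), ∑ v ∈ range (2^m),
                phase m (j+k) * (zz (2^(m+3)) ^ (r*(u+v+2^(m+1))) * (starRingEnd ℂ) (zz (2^(m+3)) ^ (r*(j+k)))) := by
              congr 1
              exact Finset.sum_comm
    _ = (((2^(m+3):ℕ)):ℂ)⁻¹ * ∑ r ∈ range (2^(m+3)),
          (∑ u ∈ range (2^m), zz (2^(m+3)) ^ (r*u))^2 * zz (2^(m+3)) ^ (r * 2^(m+1)) *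
          (zz (2^(m+2)) ^ (j*k) *
            ((starRingEnd ℂ) (zz (2^(m+3)) ^ (r*j)) * phase m j) *
            ((starRingEnd ℂ) (zz (2^(m+3)) ^ (r*k)) * Bb m k)) := by
        congr 1
        refine Finset.sum_congr rfl (fun r _ => ?_)
        calc ∑ u ∈ range (2^m), ∑ v ∈ range (2^m),
              phase m (j+k) * (zz (2^(m+3)) ^ (r*(u+v+2^(m+1))) * (starRingEnd ℂ) (zz (2^(m+3)) ^ (r*(j+k))))
            = ∑ u ∈ range (2^m), ∑ v ∈ range (2^m),
                (zz (2^(m+3)) ^ (r*u) * zz (2^(m+3)) ^ (r*v)) * zz (2^(m+3)) ^ (r * 2^(m+1)) *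
                (zz (2^(m+2)) ^ (j*k) *
                  ((starRingEnd ℂ) (zz (2^(m+3)) ^ (r*j)) * phase m j) *
                  ((starRingEnd ℂ) (zz (2^(m+3)) ^ (r*k)) * Bb m k)) :=
              Finset.sum_congr rfl (fun u _ => Finset.sum_congr rfl (fun v _ => term_eq r u v))
          _ = (∑ u ∈ range (2^m), zz (2^(m+3)) ^ (r*u))^2 * zz (2^(m+3)) ^ (r * 2^(m+1)) *
              (zz (2^(m+2)) ^ (j*k) *
                ((starRingEnd ℂ) (zz (2^(m+3)) ^ (r*j)) * phase m j) *
                ((starRingEnd ℂ) (zz (2^(m+3)) ^ (r*k)) * Bb m k)) := by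
              rw [sq, Finset.sum_mul_sum]
              simp only [Finset.sum_mul]
              try exact Finset.sum_congr rfl (fun u _ => Finset.sum_congr rfl (fun v _ => by ring))




lemma sum_comm3 {g : ℕ → ℕ → ℕ → ℂ} (s t u : Finset ℕ) :
    ∑ j ∈ s, ∑ k ∈ t, ∑ r ∈ u, g j k r = ∑ r ∈ u, ∑ j ∈ s, ∑ k ∈ t, g j k r :=
  calc ∑ j ∈ s, ∑ k ∈ t, ∑ r ∈ u, g j k r
      = ∑ j ∈ s, ∑ r ∈ u, ∑ k ∈ t, g j k r :=
        Finset.sum_congr rfl (fun j _ => Finset.sum_comm)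
    _ = ∑ r ∈ u, ∑ j ∈ s, ∑ k ∈ t, g j k r := Finset.sum_comm

lemma phase_norm (m n : ℕ) : ‖phase m n‖ = 1 := Complex.norm_exp_ofReal_mul_I _

lemma Bb_norm (m k : ℕ) : ‖Bb m k‖ = 1 := Complex.norm_exp_ofReal_mul_I _

/-- The bilinear bound for a single block. -/
lemma block_bound (m : ℕ) (c : ℝ) (hc : 0 ≤ c) (NN : ℕ) (x y : ℕ → ℂ)
    (hx : ∀ j, ‖x j‖ ≤ 1) (hy : ∀ k, ‖y k‖ ≤ 1) :
    ‖∑ j ∈ range (NN+1), ∑ k ∈ range (NN+1),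
        ((c:ℂ) * phase m (j+k) * ((Tcnt m (j+k) : ℕ):ℂ)) * x j * y k‖
      ≤ c * (2^m : ℝ) * ((2^(m+2) : ℝ) * Real.sqrt (2^(m+2))) := by
  classical
  set J : ℕ := 2^(m+2) with hJdef
  set P : ℕ := 2^(m+3) with hPdef
  have hJ : 0 < J := Nat.pow_pos (by norm_num)
  have hP : 0 < P := Nat.pow_pos (by norm_num)
  set x' : ℕ → ℂ := fun j => if j ≤ NN then x j else 0 with hx'def
  set y' : ℕ → ℂ := fun k => if k ≤ NN then y k else 0 with hy'def
  have hx' : ∀ j, ‖x' j‖ ≤ 1 := by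
    intro j; rw [hx'def]; dsimp only; split_ifs
    · exact hx j
    · simp
  have hy' : ∀ k, ‖y' k‖ ≤ 1 := by
    intro k; rw [hy'def]; dsimp only; split_ifs
    · exact hy k
    · simp
  set f : ℕ × ℕ → ℂ := fun p =>
    ((c:ℂ) * phase m (p.1+p.2) * ((Tcnt m (p.1+p.2) : ℕ):ℂ)) * x' p.1 * y' p.2 with hfdef
  -- padding: the sum equals the sum over range J × range J with x', y'
  have pad : ∑ j ∈ range (NN+1), ∑ k ∈ range (NN+1),
        ((c:ℂ) * phase m (j+k) * ((Tcnt m (j+k) : ℕ):ℂ)) * x j * y k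
      = ∑ j ∈ range J, ∑ k ∈ range J, f (j, k) := by
    rw [← Finset.sum_product', ← Finset.sum_product']
    set R : ℕ := max (NN+1) J with hRdef
    have h1 : range (NN+1) ×ˢ range (NN+1) ⊆ range R ×ˢ range R :=
      Finset.product_subset_product (Finset.range_subset_range.2 (le_max_left _ _))
        (Finset.range_subset_range.2 (le_max_left _ _))
    have h2 : range J ×ˢ range J ⊆ range R ×ˢ range R :=
      Finset.product_subset_product (Finset.range_subset_range.2 (le_max_right _ _))
        (Finset.range_subset_range.2 (le_max_right _ _))
    have hx0 : ∀ j, NN + 1 ≤ j → x' j = 0 := by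
      intro j hj; rw [hx'def]; exact if_neg (by omega)
    have hy0 : ∀ k, NN + 1 ≤ k → y' k = 0 := by
      intro k hk; rw [hy'def]; exact if_neg (by omega)
    have e1a : ∑ p ∈ range (NN+1) ×ˢ range (NN+1),
        ((c:ℂ) * phase m (p.1+p.2) * ((Tcnt m (p.1+p.2) : ℕ):ℂ)) * x p.1 * y p.2
        = ∑ p ∈ range (NN+1) ×ˢ range (NN+1), f p := by
      refine Finset.sum_congr rfl (fun p hp => ?_)
      simp only [Finset.mem_product, Finset.mem_range] at hp
      rw [hfdef]
      dsimp only
      rw [hx'def, hy'def]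
      dsimp only
      rw [if_pos (by omega : p.1 ≤ NN), if_pos (by omega : p.2 ≤ NN)]
    have e1b : ∑ p ∈ range (NN+1) ×ˢ range (NN+1), f p = ∑ p ∈ range R ×ˢ range R, f p := by
      refine Finset.sum_subset h1 (fun p _ hp => ?_)
      simp only [Finset.mem_product, Finset.mem_range, not_and_or, not_lt] at hp
      rcases hp with h | h
      · rw [hfdef]; dsimp only; rw [hx0 p.1 h]; ring
      · rw [hfdef]; dsimp only; rw [hy0 p.2 h]; ring
    have e2 : ∑ p ∈ range J ×ˢ range J, f p = ∑ p ∈ range R ×ˢ range R, f p := by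
      refine Finset.sum_subset h2 (fun p _ hp => ?_)
      simp only [Finset.mem_product, Finset.mem_range, not_and_or, not_lt] at hp
      have hT : Tcnt m (p.1 + p.2) = 0 := by
        apply Tcnt_eq_zero_right
        have hJle : (2:ℕ)^(m+2) ≤ p.1 + p.2 := by
          rcases hp with h | h <;> omega
        omega
      rw [hfdef]
      dsimp only
      rw [hT]
      push_cast
      ring
    rw [e1a, e1b, ← e2]

  rw [pad]
  -- apply key identity
  set D : ℕ → ℂ := fun r => ∑ u ∈ range (2^m), zz P ^ (r*u) with hDdef
  set G : ℕ → ℂ := fun r => ∑ j ∈ range J, ∑ k ∈ range J, zz J ^ (j*k) *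
      ((starRingEnd ℂ) (zz P ^ (r*j)) * phase m j * x' j) *
      ((starRingEnd ℂ) (zz P ^ (r*k)) * Bb m k * y' k) with hGdef
  have keyrw : ∑ j ∈ range J, ∑ k ∈ range J, f (j, k)
      = (c:ℂ) * (((P:ℕ):ℂ)⁻¹ * ∑ r ∈ range P, (D r)^2 * zz P ^ (r * 2^(m+1)) * G r) := by
    have stepA : ∀ j ∈ range J, ∀ k ∈ range J, f (j, k)
        = (c:ℂ) * (((P:ℕ):ℂ)⁻¹ * ∑ r ∈ range P,
            (D r)^2 * zz P ^ (r * 2^(m+1)) *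
            (zz J ^ (j*k) *
              ((starRingEnd ℂ) (zz P ^ (r*j)) * phase m j * x' j) *
              ((starRingEnd ℂ) (zz P ^ (r*k)) * Bb m k * y' k))) := by
      intro j hj k hk
      rw [mem_range] at hj hk
      have hkey := key m j k (by rw [hJdef] at hj; exact hj) (by rw [hJdef] at hk; exact hk)
      rw [hfdef]
      dsimp only
      have : (c:ℂ) * phase m (j+k) * ((Tcnt m (j+k) : ℕ):ℂ) * x' j * y' k
          = (c:ℂ) * (phase m (j+k) * ((Tcnt m (j+k) : ℕ):ℂ)) * x' j * y' k := by ring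
      rw [this, hkey]
      simp only [Finset.mul_sum, Finset.sum_mul]
      refine Finset.sum_congr (by rw [hPdef]) (fun r _ => ?_)
      simp only [hDdef, hPdef, hJdef]
      ring
    trans (∑ j ∈ range J, ∑ k ∈ range J, (c:ℂ) * (((P:ℕ):ℂ)⁻¹ * ∑ r ∈ range P,
            (D r)^2 * zz P ^ (r * 2^(m+1)) *
            (zz J ^ (j*k) *
              ((starRingEnd ℂ) (zz P ^ (r*j)) * phase m j * x' j) *
              ((starRingEnd ℂ) (zz P ^ (r*k)) * Bb m k * y' k))))
    · exact Finset.sum_congr rfl (fun j hj => Finset.sum_congr rfl (fun k hk => stepA j hj k hk))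
    · simp only [hGdef, Finset.mul_sum]
      exact sum_comm3 _ _ _
  rw [keyrw]
  have hGb : ∀ r : ℕ, ‖G r‖ ≤ (J:ℝ) * Real.sqrt J := by
    intro r
    rw [hGdef]
    dsimp only
    refine gauss J hJ (fun j => (starRingEnd ℂ) (zz P ^ (r*j)) * phase m j * x' j)
      (fun k => (starRingEnd ℂ) (zz P ^ (r*k)) * Bb m k * y' k) (fun j => ?_) (fun k => ?_)
    · rw [norm_mul, norm_mul, RCLike.norm_conj, zz_norm_pow, phase_norm, one_mul, one_mul]
      exact hx' j
    · rw [norm_mul, norm_mul, RCLike.norm_conj, zz_norm_pow, Bb_norm, one_mul, one_mul]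
      exact hy' k
  have hDnn : ∀ r : ℕ, (0:ℝ) ≤ ‖D r‖^2 := fun r => sq_nonneg _
  have hJJnn : (0:ℝ) ≤ (J:ℝ) * Real.sqrt J :=
    mul_nonneg (Nat.cast_nonneg _) (Real.sqrt_nonneg _)
  have hS : ‖∑ r ∈ range P, (D r)^2 * zz P ^ (r * 2^(m+1)) * G r‖
      ≤ ((P:ℝ) * 2^m) * ((J:ℝ) * Real.sqrt J) := by
    calc ‖∑ r ∈ range P, (D r)^2 * zz P ^ (r * 2^(m+1)) * G r‖
        ≤ ∑ r ∈ range P, ‖(D r)^2 * zz P ^ (r * 2^(m+1)) * G r‖ := norm_sum_le _ _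
      _ = ∑ r ∈ range P, ‖D r‖^2 * ‖G r‖ := by
          refine Finset.sum_congr rfl (fun r _ => ?_)
          rw [norm_mul, norm_mul, norm_pow, zz_norm_pow, mul_one]
      _ ≤ ∑ r ∈ range P, ‖D r‖^2 * ((J:ℝ) * Real.sqrt J) :=
          Finset.sum_le_sum (fun r _ => mul_le_mul_of_nonneg_left (hGb r) (hDnn r))
      _ = (∑ r ∈ range P, ‖D r‖^2) * ((J:ℝ) * Real.sqrt J) := by
          rw [Finset.sum_mul]
      _ = ((P:ℝ) * 2^m) * ((J:ℝ) * Real.sqrt J) := by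
          rw [hDdef]
          dsimp only
          rw [parseval P (2^m) (Nat.pow_pos (by norm_num)) (by
            rw [hPdef]
            exact Nat.pow_le_pow_right (by norm_num) (by omega))]
          push_cast
          ring
  have hPne : ((P:ℕ):ℝ) ≠ 0 := by
    exact_mod_cast Nat.cast_ne_zero.2 hP.ne'
  calc ‖(c:ℂ) * (((P:ℕ):ℂ)⁻¹ * ∑ r ∈ range P, (D r)^2 * zz P ^ (r * 2^(m+1)) * G r)‖
      = c * (((P:ℕ):ℝ)⁻¹ * ‖∑ r ∈ range P, (D r)^2 * zz P ^ (r * 2^(m+1)) * G r‖) := by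
        rw [norm_mul, norm_mul, norm_inv]
        rw [Complex.norm_real, Real.norm_eq_abs, _root_.abs_of_nonneg hc,
          Complex.norm_natCast]
    _ ≤ c * (((P:ℕ):ℝ)⁻¹ * (((P:ℝ) * 2^m) * ((J:ℝ) * Real.sqrt J))) := by
        refine mul_le_mul_of_nonneg_left ?_ hc
        exact mul_le_mul_of_nonneg_left hS (by positivity)
    _ = c * (2^m : ℝ) * ((2^(m+2) : ℝ) * Real.sqrt (2^(m+2))) := by
        rw [hJdef, hPdef]
        push_cast
        have h : ((2:ℝ)^(m+3))⁻¹ * ((2:ℝ)^(m+3) * 2^m * ((2:ℝ)^(m+2) * Real.sqrt (2^(m+2))))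
            = (2:ℝ)^m * ((2:ℝ)^(m+2) * Real.sqrt (2^(m+2))) := by
          field_simp
        rw [h]
        ring
  



/-- block amplitude -/
def cc (t : ℝ) (m : ℕ) : ℝ := (2:ℝ) ^ (-(5 * (m:ℝ)) / 2) * (m:ℝ) ^ (-(1:ℝ) / t)

lemma cc_nonneg (t : ℝ) (m : ℕ) : 0 ≤ cc t m :=
  mul_nonneg (Real.rpow_nonneg (by norm_num) _) (Real.rpow_nonneg (Nat.cast_nonneg _) _)

/-- the block pieces of the sequence -/
def blk (t : ℝ) (m n : ℕ) : ℂ := ((cc t m : ℝ) : ℂ) * phase m n * ((Tcnt m n : ℕ) : ℂ)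

/-- the sequence itself -/
def gam (t : ℝ) (n : ℕ) : ℂ := ∑ m ∈ range n, blk t m n

lemma blk_zero_low (t : ℝ) (m n : ℕ) (h : n < 2^(m+1)) : blk t m n = 0 := by
  rw [blk, Tcnt_eq_zero_left m n h]
  simp

lemma blk_zero_high (t : ℝ) (m n : ℕ) (h : 2^(m+2) - 1 ≤ n) : blk t m n = 0 := by
  rw [blk, Tcnt_eq_zero_right m n h]
  simp

lemma gam_eq_sum (t : ℝ) (n M : ℕ) (h : n ≤ M) : gam t n = ∑ m ∈ range M, blk t m n := by
  rw [gam]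
  refine Finset.sum_subset (Finset.range_subset_range.2 h) (fun m _ hm => ?_)
  rw [Finset.mem_range, not_lt] at hm
  refine blk_zero_low t m n (lt_of_le_of_lt (le_trans hm (Nat.lt_two_pow_self (n := m)).le) ?_)
  exact Nat.pow_lt_pow_right (by norm_num) (by omega)

/-- the per-block bound, in final arithmetic form -/
lemma block_bound' (t : ℝ) (m : ℕ) (NN : ℕ) (x y : ℕ → ℂ)
    (hx : ∀ j, ‖x j‖ ≤ 1) (hy : ∀ k, ‖y k‖ ≤ 1) :
    ‖∑ j ∈ range (NN+1), ∑ k ∈ range (NN+1), blk t m (j+k) * x j * y k‖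
      ≤ 8 * (m:ℝ) ^ (-(1:ℝ) / t) := by
  have hb := block_bound m (cc t m) (cc_nonneg t m) NN x y hx hy
  have harith : cc t m * (2^m : ℝ) * ((2^(m+2) : ℝ) * Real.sqrt (2^(m+2)))
      = 8 * (m:ℝ) ^ (-(1:ℝ) / t) := by
    have h1 : ((2:ℝ)^(m:ℕ)) = (2:ℝ) ^ ((m:ℝ)) := (Real.rpow_natCast 2 m).symm
    have h2 : ((2:ℝ)^(m+2:ℕ)) = (2:ℝ) ^ ((m:ℝ)+2) := by
      rw [← Real.rpow_natCast 2 (m+2)]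
      push_cast
      ring_nf
    have h3 : Real.sqrt ((2:ℝ)^(m+2:ℕ)) = (2:ℝ) ^ (((m:ℝ)+2)/2) := by
      rw [h2, Real.sqrt_eq_rpow, ← Real.rpow_mul (by norm_num)]
      ring_nf
    rw [cc, h3, h1, h2]
    rw [show (2:ℝ) ^ (-(5 * (m:ℝ)) / 2) * (m:ℝ) ^ (-(1:ℝ)/t) * (2:ℝ)^((m:ℝ)) *
        ((2:ℝ)^((m:ℝ)+2) * (2:ℝ)^(((m:ℝ)+2)/2))
        = (m:ℝ) ^ (-(1:ℝ)/t) * ((2:ℝ) ^ (-(5 * (m:ℝ)) / 2) * (2:ℝ)^((m:ℝ)) *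
          (2:ℝ)^((m:ℝ)+2) * (2:ℝ)^(((m:ℝ)+2)/2)) from by ring]
    rw [← Real.rpow_add (by norm_num : (0:ℝ) < 2), ← Real.rpow_add (by norm_num : (0:ℝ) < 2),
      ← Real.rpow_add (by norm_num : (0:ℝ) < 2)]
    rw [show -(5 * (m:ℝ)) / 2 + (m:ℝ) + ((m:ℝ)+2) + ((m:ℝ)+2)/2 = (3:ℝ) from by ring]
    rw [show (2:ℝ) ^ (3:ℝ) = 8 from by
      rw [show (3:ℝ) = ((3:ℕ):ℝ) from by norm_num, Real.rpow_natCast]; norm_num]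
    ring
  rw [← harith]
  calc ‖∑ j ∈ range (NN+1), ∑ k ∈ range (NN+1), blk t m (j+k) * x j * y k‖
      = ‖∑ j ∈ range (NN+1), ∑ k ∈ range (NN+1),
          (((cc t m : ℝ):ℂ) * phase m (j+k) * ((Tcnt m (j+k) : ℕ):ℂ)) * x j * y k‖ := rfl
    _ ≤ _ := hb

lemma summable_aux (t : ℝ) (ht0 : 0 < t) (ht1 : t < 1) :
    Summable (fun m : ℕ => (m:ℝ) ^ (-(1:ℝ) / t)) := by
  rw [Real.summable_nat_rpow]
  have : 1 < 1 / t := by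
    rw [lt_div_iff₀ ht0]
    linarith
  have : -(1:ℝ)/t = -(1/t) := by ring
  rw [this]
  linarith

/-- first half: the Hankel matrix is in the injective tensor product -/
lemma hankel_part (t : ℝ) (ht0 : 0 < t) (ht1 : t < 1) :
    ∃ C : ℝ, ∀ (N : ℕ) (x y : ℕ → ℂ), (∀ j, ‖x j‖ ≤ 1) → (∀ k, ‖y k‖ ≤ 1) →
    ‖∑ j ∈ Finset.range (N + 1), ∑ k ∈ Finset.range (N + 1), gam t (j + k) * x j * y k‖
      ≤ 8 * ∑' m : ℕ, (m:ℝ) ^ (-(1:ℝ) / t) := by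
  refine ⟨8 * ∑' m : ℕ, (m:ℝ) ^ (-(1:ℝ) / t), fun NN x y hx hy => ?_⟩
  set M : ℕ := 2*NN + 1 with hM
  have hsplit : ∑ j ∈ range (NN+1), ∑ k ∈ range (NN+1), gam t (j+k) * x j * y k
      = ∑ m ∈ range M, ∑ j ∈ range (NN+1), ∑ k ∈ range (NN+1), blk t m (j+k) * x j * y k := by
    rw [← sum_comm3]
    refine Finset.sum_congr rfl (fun j hj => Finset.sum_congr rfl (fun k hk => ?_))
    rw [mem_range] at hj hk
    rw [gam_eq_sum t (j+k) M (by omega), Finset.sum_mul, Finset.sum_mul]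
  rw [hsplit]
  calc ‖∑ m ∈ range M, ∑ j ∈ range (NN+1), ∑ k ∈ range (NN+1), blk t m (j+k) * x j * y k‖
      ≤ ∑ m ∈ range M, ‖∑ j ∈ range (NN+1), ∑ k ∈ range (NN+1), blk t m (j+k) * x j * y k‖ :=
        norm_sum_le _ _
    _ ≤ ∑ m ∈ range M, 8 * (m:ℝ) ^ (-(1:ℝ) / t) :=
        Finset.sum_le_sum (fun m _ => block_bound' t m NN x y hx hy)
    _ = 8 * ∑ m ∈ range M, (m:ℝ) ^ (-(1:ℝ) / t) := by rw [Finset.mul_sum]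
    _ ≤ 8 * ∑' m : ℕ, (m:ℝ) ^ (-(1:ℝ) / t) := by
        refine mul_le_mul_of_nonneg_left ?_ (by norm_num)
        exact Summable.sum_le_tsum _ (fun m _ => Real.rpow_nonneg (Nat.cast_nonneg _) _)
          (summable_aux t ht0 ht1)

lemma Tcnt_ge (m v : ℕ) (hv : v < 2^m) : v + 1 ≤ Tcnt m (2^(m+1) + v) := by
  rw [Tcnt]
  have := Finset.card_le_card_of_injOn (fun i => (i, v - i))
    (t := (range (2^m) ×ˢ range (2^m)).filter (fun p => p.1 + p.2 + 2^(m+1) = 2^(m+1) + v))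
    (s := range (v+1))
    (by
      intro i hi
      rw [Finset.mem_coe, mem_range] at hi
      simp only [Finset.mem_coe, Finset.mem_filter, Finset.mem_product, Finset.mem_range]
      refine ⟨⟨by omega, by omega⟩, by omega⟩)
    (by
      intro i _ j _ hij
      exact congrArg Prod.fst hij)
  simpa using this

lemma norm_blk (t : ℝ) (m n : ℕ) : ‖blk t m n‖ = cc t m * Tcnt m n := by
  rw [blk, norm_mul, norm_mul, phase_norm, Complex.norm_real, Real.norm_eq_abs,
    _root_.abs_of_nonneg (cc_nonneg t m), Complex.norm_natCast, mul_one]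

lemma gam_eq_blk (t : ℝ) (p : ℕ) (n : ℕ) (h1 : 2^(p+2) ≤ n) (h2 : n < 2^(p+2) + 2^(p+1)) :
    gam t n = blk t (p+1) n := by
  rw [gam]
  refine Finset.sum_eq_single_of_mem (p+1) ?_ (fun m _ hm => ?_)
  · rw [mem_range]
    have : p + 1 < 2^(p+2) := lt_of_le_of_lt (Nat.le_of_lt_succ (Nat.lt_succ_of_lt
      (Nat.lt_two_pow_self (n := p+1)))) (Nat.pow_lt_pow_right (by norm_num) (by omega))
    omega
  · rcases lt_or_gt_of_ne hm with hlt | hgt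
    · -- m < p+1 : n is too big
      refine blk_zero_high t m n ?_
      have : 2^(m+2) ≤ 2^(p+2) := Nat.pow_le_pow_right (by norm_num) (by omega)
      omega
    · -- m > p+1 : n is too small
      refine blk_zero_low t m n ?_
      have : 2^(p+2) + 2^(p+1) ≤ 2^(m+1) := by
        have h3 : (2:ℕ)^(p+3) ≤ 2^(m+1) := Nat.pow_le_pow_right (by norm_num) (by omega)
        have : (2:ℕ)^(p+3) = 2^(p+2) + 2^(p+2) := by ring
        have h4 : (2:ℕ)^(p+1) ≤ 2^(p+2) := Nat.pow_le_pow_right (by norm_num) (by omega)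
        omega
      omega

lemma block_term_lower (t : ℝ) (ht0 : 0 < t) (ht1 : t < 1) (p n : ℕ)
    (h1 : 2^(p+2) + 2^p ≤ n) (h2 : n < 2^(p+2) + 2^(p+1)) :
    (cc t (p+1) * (2:ℝ)^p) ^ t * ((1/2) * ((2:ℝ)^(p+2)) ^ (3*t/2 - 1))
      ≤ ‖gam t n‖ ^ t * (1 + (n:ℝ)) ^ (3*t/2 - 1) := by
  have hn1 : 2^(p+2) ≤ n := le_trans (Nat.le_add_right _ _) h1
  have hgb : gam t n = blk t (p+1) n := gam_eq_blk t p n hn1 h2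
  -- lower bound the norm
  have hT : (2:ℝ)^p ≤ (Tcnt (p+1) n : ℝ) := by
    have epow : (2:ℕ)^(p+2) = 4 * 2^p ∧ (2:ℕ)^(p+1) = 2 * 2^p := by
      constructor <;> ring
    have hv : n - 2^(p+2) < 2^(p+1) := by omega
    have := Tcnt_ge (p+1) (n - 2^(p+2)) hv
    have hn : 2^(p+1+1) + (n - 2^(p+2)) = n := by omega
    rw [hn] at this
    have h2p : (2:ℕ)^p ≤ (n - 2^(p+2)) + 1 := by omega
    have : ((n - 2^(p+2) : ℕ) + 1 : ℕ) ≤ Tcnt (p+1) n := by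
      rw [← hn] at this ⊢
      exact this
    exact_mod_cast le_trans h2p this
  have hnorm : cc t (p+1) * (2:ℝ)^p ≤ ‖gam t n‖ := by
    rw [hgb, norm_blk]
    exact mul_le_mul_of_nonneg_left hT (cc_nonneg t (p+1))
  have hnorm_t : (cc t (p+1) * (2:ℝ)^p) ^ t ≤ ‖gam t n‖ ^ t :=
    Real.rpow_le_rpow (mul_nonneg (cc_nonneg _ _) (by positivity)) hnorm ht0.le
  -- lower bound the weight
  have hw : (1/2) * ((2:ℝ)^(p+2)) ^ (3*t/2 - 1) ≤ (1 + (n:ℝ)) ^ (3*t/2 - 1) := by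
    have hlow : (2:ℝ)^(p+2) ≤ 1 + (n:ℝ) := by
      have : ((2:ℕ)^(p+2) : ℝ) ≤ (n:ℝ) := by exact_mod_cast hn1
      push_cast at this ⊢
      linarith
    have hhigh : 1 + (n:ℝ) ≤ (2:ℝ)^(p+3) := by
      have h3 : n + 1 ≤ 2^(p+2) + 2^(p+1) := by omega
      have h4 : (2:ℕ)^(p+2) + 2^(p+1) ≤ 2^(p+3) := by
        have : (2:ℕ)^(p+3) = 2^(p+2) + 2^(p+2) := by ring
        have : (2:ℕ)^(p+1) ≤ 2^(p+2) := Nat.pow_le_pow_right (by norm_num) (by omega)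
        omega
      have : ((n:ℝ) + 1) ≤ ((2^(p+2) + 2^(p+1) : ℕ) : ℝ) := by exact_mod_cast h3
      have h5 : (((2:ℕ)^(p+2) + 2^(p+1) : ℕ) : ℝ) ≤ (((2:ℕ)^(p+3) : ℕ) : ℝ) := by exact_mod_cast h4
      push_cast at this h5 ⊢
      linarith
    rcases le_or_gt 0 (3*t/2 - 1) with he | he
    · -- nonneg exponent: use lower bound on base
      have := Real.rpow_le_rpow (by positivity) hlow he
      have hnn : (0:ℝ) ≤ ((2:ℝ)^(p+2)) ^ (3*t/2-1) := Real.rpow_nonneg (by positivity) _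
      nlinarith
    · -- negative exponent: use upper bound on base
      have hmono := Real.rpow_le_rpow_of_nonpos (by positivity : (0:ℝ) < 1 + (n:ℝ)) hhigh he.le
      -- (2^(p+3))^e = 2^e * (2^(p+2))^e ≥ (1/2) * (2^(p+2))^e
      have hsplit : ((2:ℝ)^(p+3)) ^ (3*t/2-1) = (2:ℝ) ^ (3*t/2-1) * ((2:ℝ)^(p+2)) ^ (3*t/2-1) := by
        rw [← Real.mul_rpow (by norm_num) (by positivity)]
        congr 1
        ring
      have hhalf : (1/2 : ℝ) ≤ (2:ℝ) ^ (3*t/2-1) := by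
        have : (2:ℝ) ^ (-1:ℝ) ≤ (2:ℝ) ^ (3*t/2-1) :=
          Real.rpow_le_rpow_of_exponent_le one_le_two (by linarith)
        rwa [Real.rpow_neg_one, show ((2:ℝ)⁻¹) = 1/2 from by norm_num] at this
      have hnn : (0:ℝ) ≤ ((2:ℝ)^(p+2)) ^ (3*t/2-1) := Real.rpow_nonneg (by positivity) _
      calc (1/2) * ((2:ℝ)^(p+2)) ^ (3*t/2 - 1)
          ≤ (2:ℝ) ^ (3*t/2-1) * ((2:ℝ)^(p+2)) ^ (3*t/2-1) :=
            mul_le_mul_of_nonneg_right hhalf hnn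
        _ = ((2:ℝ)^(p+3)) ^ (3*t/2-1) := hsplit.symm
        _ ≤ (1 + (n:ℝ)) ^ (3*t/2-1) := hmono
  have h1' : (0:ℝ) ≤ (cc t (p+1) * (2:ℝ)^p) ^ t :=
    Real.rpow_nonneg (mul_nonneg (cc_nonneg _ _) (by positivity)) _
  have h2' : (0:ℝ) ≤ (1/2) * ((2:ℝ)^(p+2)) ^ (3*t/2 - 1) := by positivity
  exact mul_le_mul hnorm_t hw h2' (Real.rpow_nonneg (norm_nonneg _) _)

lemma block_sum_lower (t : ℝ) (ht0 : 0 < t) (ht1 : t < 1) (p : ℕ) :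
    (8 * ((p:ℝ)+1))⁻¹
      ≤ ∑ n ∈ Finset.Ico (2^(p+2)+2^p) (2^(p+2)+2^(p+1)),
          ‖gam t n‖ ^ t * (1 + (n:ℝ)) ^ (3*t/2 - 1) := by
  have ht : t ≠ 0 := ht0.ne'
  set Λ : ℝ := (cc t (p+1) * (2:ℝ)^p) ^ t * ((1/2) * ((2:ℝ)^(p+2)) ^ (3*t/2 - 1)) with hΛ
  have hcard : (Finset.Ico (2^(p+2)+2^p) (2^(p+2)+2^(p+1))).card = 2^p := by
    rw [Nat.card_Ico]
    have : (2:ℕ)^(p+1) = 2 * 2^p := by ring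
    omega
  have hsum : ((2:ℝ)^p) * Λ
      ≤ ∑ n ∈ Finset.Ico (2^(p+2)+2^p) (2^(p+2)+2^(p+1)),
          ‖gam t n‖ ^ t * (1 + (n:ℝ)) ^ (3*t/2 - 1) := by
    have := Finset.card_nsmul_le_sum (Finset.Ico (2^(p+2)+2^p) (2^(p+2)+2^(p+1)))
      (fun n => ‖gam t n‖ ^ t * (1 + (n:ℝ)) ^ (3*t/2 - 1)) Λ
      (fun n hn => by
        rw [Finset.mem_Ico] at hn
        exact block_term_lower t ht0 ht1 p n hn.1 hn.2)
    rw [hcard, nsmul_eq_mul] at this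
    have hc : ((2^p : ℕ) : ℝ) = (2:ℝ)^p := by push_cast; ring
    rwa [hc] at this
  -- arithmetic: (2:ℝ)^p * Λ = ((p:ℝ)+1)⁻¹ * 2^(t/2-3)
  have hp1 : (0:ℝ) < (p:ℝ) + 1 := by positivity
  have harith : ((2:ℝ)^p) * Λ = ((p:ℝ)+1)⁻¹ * (2:ℝ) ^ (t/2 - 3) := by
    rw [hΛ, cc]
    have e2p : ((2:ℝ)^(p:ℕ)) = (2:ℝ)^((p:ℝ)) := (Real.rpow_natCast 2 p).symm
    have e2p2 : ((2:ℝ)^(p+2:ℕ)) = (2:ℝ)^((p:ℝ)+2) := by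
      rw [← Real.rpow_natCast 2 (p+2)]; push_cast; ring_nf
    have ecast : ((p+1:ℕ):ℝ) = (p:ℝ)+1 := by push_cast; ring
    rw [e2p, e2p2, ecast]
    set A : ℝ := -(5 * ((p:ℝ)+1)) / 2 with hA
    -- (2^A * w * 2^p)^t
    have hcomb : (2:ℝ)^A * ((p:ℝ)+1) ^ (-(1:ℝ)/t) * (2:ℝ)^((p:ℝ))
        = (2:ℝ)^(A + (p:ℝ)) * ((p:ℝ)+1) ^ (-(1:ℝ)/t) := by
      rw [Real.rpow_add (by norm_num : (0:ℝ) < 2)]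
      ring
    rw [hcomb]
    rw [Real.mul_rpow (Real.rpow_nonneg (by norm_num) _) (Real.rpow_nonneg hp1.le _)]
    rw [← Real.rpow_mul (by norm_num : (0:ℝ) ≤ 2), ← Real.rpow_mul hp1.le,
      ← Real.rpow_mul (by norm_num : (0:ℝ) ≤ 2)]
    rw [show (-(1:ℝ)/t) * t = -1 from by field_simp]
    rw [Real.rpow_neg_one]
    rw [show (1:ℝ)/2 = (2:ℝ)^(-1:ℝ) from by rw [Real.rpow_neg_one]; norm_num]
    rw [show ((2:ℝ)^((A + (p:ℝ))*t) * ((p:ℝ)+1)⁻¹ * ((2:ℝ)^(-1:ℝ) * (2:ℝ)^(((p:ℝ)+2)*(3*t/2-1))))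
        = ((p:ℝ)+1)⁻¹ * ((2:ℝ)^((A + (p:ℝ))*t) * (2:ℝ)^(-1:ℝ) * (2:ℝ)^(((p:ℝ)+2)*(3*t/2-1)))
        from by ring]
    rw [← Real.rpow_add (by norm_num : (0:ℝ) < 2), ← Real.rpow_add (by norm_num : (0:ℝ) < 2)]
    rw [show (2:ℝ)^((p:ℝ)) * (((p:ℝ)+1)⁻¹ * (2:ℝ)^((A + (p:ℝ))*t + -1 + ((p:ℝ)+2)*(3*t/2-1)))
        = ((p:ℝ)+1)⁻¹ * ((2:ℝ)^((p:ℝ)) * (2:ℝ)^((A + (p:ℝ))*t + -1 + ((p:ℝ)+2)*(3*t/2-1)))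
        from by ring]
    rw [← Real.rpow_add (by norm_num : (0:ℝ) < 2)]
    congr 1
    rw [hA]
    ring_nf
  have hfinal : (8 * ((p:ℝ)+1))⁻¹ ≤ ((p:ℝ)+1)⁻¹ * (2:ℝ) ^ (t/2 - 3) := by
    have h8 : (2:ℝ)^(-3:ℝ) ≤ (2:ℝ)^(t/2-3) :=
      Real.rpow_le_rpow_of_exponent_le one_le_two (by linarith)
    have hv : (2:ℝ)^(-3:ℝ) = 1/8 := by
      rw [show (-3:ℝ) = -((3:ℕ):ℝ) from by norm_num, Real.rpow_neg (by norm_num),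
        Real.rpow_natCast]
      norm_num
    rw [mul_inv]
    calc (8:ℝ)⁻¹ * ((p:ℝ)+1)⁻¹ = ((p:ℝ)+1)⁻¹ * (1/8) := by ring
      _ ≤ ((p:ℝ)+1)⁻¹ * (2:ℝ)^(t/2-3) := by
          refine mul_le_mul_of_nonneg_left ?_ (by positivity)
          rw [← hv]
          exact h8
  calc (8 * ((p:ℝ)+1))⁻¹ ≤ ((p:ℝ)+1)⁻¹ * (2:ℝ) ^ (t/2 - 3) := hfinal
    _ = ((2:ℝ)^p) * Λ := harith.symm
    _ ≤ _ := hsum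

lemma gam_f_nonneg (t : ℝ) (n : ℕ) : 0 ≤ ‖gam t n‖ ^ t * (1 + (n:ℝ)) ^ (3*t/2 - 1) :=
  mul_nonneg (Real.rpow_nonneg (norm_nonneg _) _) (Real.rpow_nonneg (by positivity) _)

lemma cumulative (t : ℝ) (ht0 : 0 < t) (ht1 : t < 1) (M : ℕ) :
    ∑ p ∈ range M, (8 * ((p:ℝ)+1))⁻¹
      ≤ ∑ n ∈ range (2^(M+2)), ‖gam t n‖ ^ t * (1 + (n:ℝ)) ^ (3*t/2 - 1) := by
  induction M with
  | zero =>
    simp only [range_zero, Finset.sum_empty]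
    exact Finset.sum_nonneg (fun n _ => gam_f_nonneg t n)
  | succ M ih =>
    rw [Finset.sum_range_succ]
    have hsplit : ∑ n ∈ range (2^(M+3)), ‖gam t n‖ ^ t * (1 + (n:ℝ)) ^ (3*t/2 - 1)
        = ∑ n ∈ range (2^(M+2)), ‖gam t n‖ ^ t * (1 + (n:ℝ)) ^ (3*t/2 - 1)
          + ∑ n ∈ Finset.Ico (2^(M+2)) (2^(M+3)), ‖gam t n‖ ^ t * (1 + (n:ℝ)) ^ (3*t/2 - 1) := by
      rw [Finset.range_eq_Ico, Finset.range_eq_Ico]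
      exact (Finset.sum_Ico_consecutive (fun n : ℕ => ‖gam t n‖ ^ t * (1 + (n:ℝ)) ^ (3*t/2 - 1)) (Nat.zero_le _)
        (Nat.pow_le_pow_right (n := 2) (by norm_num) (by omega : M+2 ≤ M+3))).symm
    rw [show M+1+2 = M+3 from by omega, hsplit]
    have hblocksub : Finset.Ico (2^(M+2)+2^M) (2^(M+2)+2^(M+1)) ⊆ Finset.Ico (2^(M+2)) (2^(M+3)) := by
      refine Finset.Ico_subset_Ico (Nat.le_add_right _ _) ?_
      have h1 : (2:ℕ)^(M+3) = 2^(M+2) + 2^(M+2) := by ring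
      have h2 : (2:ℕ)^(M+1) ≤ 2^(M+2) := Nat.pow_le_pow_right (by norm_num) (by omega)
      omega
    have hb : (8 * ((M:ℝ)+1))⁻¹
        ≤ ∑ n ∈ Finset.Ico (2^(M+2)) (2^(M+3)), ‖gam t n‖ ^ t * (1 + (n:ℝ)) ^ (3*t/2 - 1) :=
      le_trans (block_sum_lower t ht0 ht1 M)
        (Finset.sum_le_sum_of_subset_of_nonneg hblocksub (fun n _ _ => gam_f_nonneg t n))
    linarith

end HankelAux

/-- The Hankel matrix `{γ_{j+k}}` belongs to the injective tensor product `ℓ¹ ⊗̌ ℓ¹`: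
the partial bilinear sums against sequences in the unit ball of `ℓ^∞` are uniformly bounded. -/
def HankelInInj (γ : ℕ → ℂ) : Prop :=
  ∃ C : ℝ, ∀ (N : ℕ) (x y : ℕ → ℂ), (∀ j, ‖x j‖ ≤ 1) → (∀ k, ‖y k‖ ≤ 1) →
    ‖∑ j ∈ Finset.range (N + 1), ∑ k ∈ Finset.range (N + 1), γ (j + k) * x j * y k‖ ≤ C

/-- For `0 < t < 1`: there is a Hankel matrix `{γ_{j+k}}` in `ℓ¹ ⊗̌ ℓ¹` with
`∑_k |γ_k|^t (1+k)^{3t/2 - 1} = ∞`. -/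
theorem hankel_inj_weighted_not_summable (t : ℝ) (ht0 : 0 < t) (ht1 : t < 1) :
    ∃ γ : ℕ → ℂ, HankelInInj γ ∧
      ¬ Summable fun k : ℕ => ‖γ k‖ ^ t * (1 + (k : ℝ)) ^ (3 * t / 2 - 1) := by
  refine ⟨gam t, ?_, ?_⟩
  · obtain ⟨C, hC⟩ := hankel_part t ht0 ht1
    exact ⟨8 * ∑' m : ℕ, (m:ℝ) ^ (-(1:ℝ) / t), hC⟩
  · intro hs
    set f : ℕ → ℝ := fun k => ‖gam t k‖ ^ t * (1 + (k:ℝ)) ^ (3 * t / 2 - 1) with hf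
    have hb : ∀ M : ℕ, ∑ p ∈ Finset.range M, (8 * ((p:ℝ)+1))⁻¹ ≤ ∑' k, f k := by
      intro M
      refine le_trans (cumulative t ht0 ht1 M) ?_
      exact Summable.sum_le_tsum _ (fun n _ => gam_f_nonneg t n) hs
    have hten : Filter.Tendsto (fun M => ∑ p ∈ Finset.range M, (8 * ((p:ℝ)+1))⁻¹)
        Filter.atTop Filter.atTop := by
      have heq : (fun M => ∑ p ∈ Finset.range M, (8 * ((p:ℝ)+1))⁻¹)
          = (fun M => (8:ℝ)⁻¹ * ∑ p ∈ Finset.range M, 1/((p:ℝ)+1)) := by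
        funext M
        rw [Finset.mul_sum]
        refine Finset.sum_congr rfl (fun p _ => ?_)
        rw [mul_inv, one_div]
      rw [heq]
      exact (Real.tendsto_sum_range_one_div_nat_succ_atTop).const_mul_atTop (by norm_num)
    obtain ⟨M, hM⟩ := (hten.eventually_gt_atTop (∑' k, f k)).exists
    exact absurd (hb M) (not_le.2 hM)
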